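/- arXiv:2410.21811 — 2 statements merged into one kernel-verified Lean document; each statement's English description precedes it below -/
import Mathlib

section
/- For any unit vector ψ in a finite-dimensional complex Hilbert space and any finite set {A_1,...,A_M} of pairwise anti-commuting Hermitian unitary matrices, the sum over j of (⟨ψ, A_j ψ⟩)² is at most 1. -/
open Matrix

/-- For any unit vector ψ in ℂ^d and any finite set of pairwise anti-commuting
Hermitian unitary matrices A_1,...,A_M, the sum of squared expectation values is at most 1. -/
theorem sum_sq_expectation_anticommuting_le_one {d M : ℕ}
    (A : Fin M → Matrix (Fin d) (Fin d) ℂ)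
    (hherm : ∀ j, (A j).IsHermitian)
    (hunit : ∀ j, A j ∈ Matrix.unitaryGroup (Fin d) ℂ)
    (hanti : ∀ i j, i ≠ j → A i * A j = -(A j * A i))
    (ψ : Fin d → ℂ) (hψ : ∑ i, Complex.normSq (ψ i) = 1) :
    ∑ j, ((star ψ ⬝ᵥ (A j) *ᵥ ψ).re) ^ 2 ≤ 1 := by
  classical
  set c : Fin M → ℝ := fun j => (star ψ ⬝ᵥ A j *ᵥ ψ).re with hc
  set s : ℝ := ∑ j, c j ^ 2 with hs
  -- each A j squares to 1
  have hsq : ∀ j, A j * A j = 1 := by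
    intro j
    have h1 : star (A j) * A j = 1 := (Unitary.mem_iff.mp (hunit j)).1
    rwa [Matrix.star_eq_conjTranspose, (hherm j).eq] at h1
  -- self-adjointness of expectation values
  have key : ∀ (B : Matrix (Fin d) (Fin d) ℂ), B.IsHermitian →
      star (star ψ ⬝ᵥ B *ᵥ ψ) = star ψ ⬝ᵥ B *ᵥ ψ := by
    intro B hB
    conv_lhs => rw [← Matrix.star_dotProduct]
    rw [Matrix.star_mulVec, hB.eq, ← Matrix.dotProduct_mulVec]
  have hexp : ∀ j, star ψ ⬝ᵥ A j *ᵥ ψ = ((c j : ℝ) : ℂ) := by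
    intro j
    have h := key (A j) (hherm j)
    exact (Complex.conj_eq_iff_re.mp h).symm
  -- the operator B
  set B : Matrix (Fin d) (Fin d) ℂ := ∑ j, ((c j : ℝ) : ℂ) • A j with hB
  have hBherm : Bᴴ = B := by
    rw [hB, Matrix.conjTranspose_sum]
    refine Finset.sum_congr rfl fun j _ => ?_
    rw [Matrix.conjTranspose_smul, (hherm j).eq]
    norm_num
  have hψψ : star ψ ⬝ᵥ ψ = 1 := by
    have : star ψ ⬝ᵥ ψ = ∑ i, ((Complex.normSq (ψ i) : ℝ) : ℂ) := by
      simp [dotProduct, Complex.star_def, mul_comm, Complex.mul_conj]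
    rw [this, ← Complex.ofReal_sum, hψ, Complex.ofReal_one]
  have hlin : ∀ (t : Finset (Fin M)) (g : Fin M → Matrix (Fin d) (Fin d) ℂ),
      star ψ ⬝ᵥ (∑ j ∈ t, g j) *ᵥ ψ = ∑ j ∈ t, star ψ ⬝ᵥ (g j) *ᵥ ψ := by
    intro t g
    induction t using Finset.induction_on with
    | empty => simp
    | insert _ _ h ih =>
        rw [Finset.sum_insert h, Matrix.add_mulVec, dotProduct_add, ih,
          Finset.sum_insert h]
  have hBψ : star ψ ⬝ᵥ B *ᵥ ψ = ((s : ℝ) : ℂ) := by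
    rw [hB, hlin]
    simp only [Matrix.smul_mulVec, dotProduct_smul, hexp, smul_eq_mul, hs]
    push_cast
    exact Finset.sum_congr rfl fun j _ => by ring
  -- B * B = s • 1
  have hf : ∀ i j : Fin M, (((c i : ℝ) : ℂ) • A i) * (((c j : ℝ) : ℂ) • A j)
      = (((c i : ℝ) : ℂ) * ((c j : ℝ) : ℂ)) • (A i * A j) := by
    intro i j
    rw [smul_mul_assoc, mul_smul_comm, smul_smul]
  have e1 : B * B = ∑ i, ∑ j, (((c i : ℝ) : ℂ) * ((c j : ℝ) : ℂ)) • (A i * A j) := by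
    rw [hB, Finset.sum_mul_sum]
    simp_rw [hf]
  have e2 : B * B = ∑ i, ∑ j, (((c j : ℝ) : ℂ) * ((c i : ℝ) : ℂ)) • (A j * A i) := by
    rw [e1]
    exact Finset.sum_comm
  have e4 : ∀ i j : Fin M,
      (((c i : ℝ) : ℂ) * ((c j : ℝ) : ℂ)) • (A i * A j)
        + (((c j : ℝ) : ℂ) * ((c i : ℝ) : ℂ)) • (A j * A i)
      = if i = j then ((2 : ℂ) * ((c i : ℝ) : ℂ) ^ 2) • (1 : Matrix (Fin d) (Fin d) ℂ)
        else 0 := by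
    intro i j
    by_cases h : i = j
    · subst h
      rw [if_pos rfl, hsq i, ← add_smul]
      congr 1
      ring
    · rw [if_neg h, hanti i j h]
      rw [smul_neg, mul_comm (((c j : ℝ) : ℂ))]
      exact neg_add_cancel _
  have hBB2 : B * B + B * B
      = ((2 : ℂ) * ((s : ℝ) : ℂ)) • (1 : Matrix (Fin d) (Fin d) ℂ) := by
    nth_rewrite 2 [e2]
    nth_rewrite 1 [e1]
    rw [← Finset.sum_add_distrib]
    simp_rw [← Finset.sum_add_distrib, e4]
    simp only [Finset.sum_ite_eq, Finset.mem_univ, if_true]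
    rw [← Finset.sum_smul, hs]
    push_cast
    rw [Finset.mul_sum]
  have hBB : B * B = ((s : ℝ) : ℂ) • (1 : Matrix (Fin d) (Fin d) ℂ) := by
    have h2 : (2 : ℂ) • (B * B) = (2 : ℂ) • (((s : ℝ) : ℂ) • (1 : Matrix (Fin d) (Fin d) ℂ)) := by
      rw [two_smul, hBB2, smul_smul]
    exact smul_right_injective _ (two_ne_zero) h2
  -- w = B ψ
  set w : Fin d → ℂ := B *ᵥ ψ with hw
  have hww : star w ⬝ᵥ w = ((s : ℝ) : ℂ) := by
    rw [hw, Matrix.star_mulVec, hBherm, ← Matrix.dotProduct_mulVec,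
      Matrix.mulVec_mulVec, hBB]
    simp [Matrix.smul_mulVec, Matrix.one_mulVec, hψψ]
  have hwψ : star w ⬝ᵥ ψ = ((s : ℝ) : ℂ) := by
    rw [hw, Matrix.star_mulVec, hBherm, ← Matrix.dotProduct_mulVec, hBψ]
  -- u = w - s ψ
  set u : Fin d → ℂ := w - ((s : ℝ) : ℂ) • ψ with hu
  have huu : star u ⬝ᵥ u = ((s : ℝ) : ℂ) - ((s : ℝ) : ℂ) ^ 2 := by
    rw [hu]
    have hstar : star (w - ((s : ℝ) : ℂ) • ψ) = star w - ((s : ℝ) : ℂ) • star ψ := by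
      rw [star_sub, star_smul]
      norm_num
    rw [hstar]
    rw [sub_dotProduct, dotProduct_sub, dotProduct_sub,
      smul_dotProduct, smul_dotProduct, dotProduct_smul,
      dotProduct_smul, hww, hwψ, hBψ, hψψ]
    simp [smul_eq_mul]
    ring
  have hnn : 0 ≤ (star u ⬝ᵥ u).re := by
    have : star u ⬝ᵥ u = ∑ i, ((Complex.normSq (u i) : ℝ) : ℂ) := by
      simp [dotProduct, Complex.star_def, mul_comm, Complex.mul_conj]
    rw [this, ← Complex.ofReal_sum, Complex.ofReal_re]
    exact Finset.sum_nonneg fun i _ => Complex.normSq_nonneg _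
  have hsle : s ^ 2 ≤ s := by
    have := hnn
    rw [huu] at this
    have hre : (((s : ℝ) : ℂ) - ((s : ℝ) : ℂ) ^ 2).re = s - s ^ 2 := by
      rw [← Complex.ofReal_pow, ← Complex.ofReal_sub, Complex.ofReal_re]
    rw [hre] at this
    linarith
  have hs0 : 0 ≤ s := Finset.sum_nonneg fun j _ => sq_nonneg _
  nlinarith
end

section
/- For finite simple graphs Γ₁ and Γ₂ on disjoint vertex sets, the Lovász theta of the disjoint union is the sum: ϑ(Γ₁ ⊔ Γ₂) = ϑ(Γ₁) + ϑ(Γ₂). -/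
open Matrix

/-- The Lovász theta function of a graph on a finite vertex type `V`, defined via the SDP
`sup { Tr(ρJ) : ρ ⪰ 0, Tr ρ = 1, ρ_{jk} = 0 for edges {j,k} }`. -/
noncomputable def lovaszTheta {V : Type*} [Fintype V] (G : SimpleGraph V) : ℝ :=
  sSup {r : ℝ | ∃ ρ : Matrix V V ℝ, ρ.PosSemidef ∧ ρ.trace = 1 ∧
    (∀ j k, G.Adj j k → ρ j k = 0) ∧ r = ∑ j, ∑ k, ρ j k}

/-- The disjoint union of two graphs, on the sum of their vertex types. -/
def disjUnionGraph {V₁ V₂ : Type*} (G₁ : SimpleGraph V₁) (G₂ : SimpleGraph V₂) :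
    SimpleGraph (V₁ ⊕ V₂) where
  Adj x y := match x, y with
    | .inl a, .inl b => G₁.Adj a b
    | .inr a, .inr b => G₂.Adj a b
    | _, _ => False
  symm := by
    refine ⟨?_⟩
    intro x y h
    cases x <;> cases y <;> simp_all <;> exact h.symm
  loopless := by
    refine ⟨?_⟩
    intro x h
    cases x <;> simp_all

section Aux

variable {V : Type*} [Fintype V]

/-- The feasible value set of the theta SDP. -/
def thetaSet (G : SimpleGraph V) : Set ℝ :=
  {r : ℝ | ∃ ρ : Matrix V V ℝ, ρ.PosSemidef ∧ ρ.trace = 1 ∧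
    (∀ j k, G.Adj j k → ρ j k = 0) ∧ r = ∑ j, ∑ k, ρ j k}

lemma lovaszTheta_eq (G : SimpleGraph V) : lovaszTheta G = sSup (thetaSet G) := rfl

lemma sum_sum_eq_dot (ρ : Matrix V V ℝ) : ∑ j, ∑ k, ρ j k = (1 : V → ℝ) ⬝ᵥ ρ *ᵥ 1 := by
  simp [dotProduct, mulVec]

lemma herm_entry {ρ : Matrix V V ℝ} (h : ρ.IsHermitian) (i j : V) : ρ i j = ρ j i :=
  (h.apply i j).symm

lemma herm_transpose {ρ : Matrix V V ℝ} (h : ρ.IsHermitian) : ρᵀ = ρ := by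
  have := h.eq; rwa [conjTranspose_eq_transpose_of_trivial] at this

lemma herm_dot_comm {ρ : Matrix V V ℝ} (h : ρ.IsHermitian) (x y : V → ℝ) :
    y ⬝ᵥ ρ *ᵥ x = x ⬝ᵥ ρ *ᵥ y := by
  have hT : ρᵀ = ρ := herm_transpose h
  rw [dotProduct_mulVec, ← hT, ← mulVec_transpose, hT, dotProduct_comm, hT]

lemma psd_quad {ρ : Matrix V V ℝ} (h : ρ.PosSemidef) (x : V → ℝ) : 0 ≤ x ⬝ᵥ ρ *ᵥ x := by
  simpa using h.dotProduct_mulVec_nonneg x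

lemma psd_cauchy {ρ : Matrix V V ℝ} (h : ρ.PosSemidef) (x y : V → ℝ) :
    (x ⬝ᵥ ρ *ᵥ y) ^ 2 ≤ (x ⬝ᵥ ρ *ᵥ x) * (y ⬝ᵥ ρ *ᵥ y) := by
  have key : ∀ s : ℝ, 0 ≤ (y ⬝ᵥ ρ *ᵥ y) * (s * s) + (2 * (x ⬝ᵥ ρ *ᵥ y)) * s + x ⬝ᵥ ρ *ᵥ x := by
    intro s
    have h0 := psd_quad h (x + s • y)
    have expand : (x + s • y) ⬝ᵥ ρ *ᵥ (x + s • y)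
        = x ⬝ᵥ ρ *ᵥ x + s * (x ⬝ᵥ ρ *ᵥ y) + s * (y ⬝ᵥ ρ *ᵥ x) + s * s * (y ⬝ᵥ ρ *ᵥ y) := by
      simp [mulVec_add, mulVec_smul, dotProduct_add, add_dotProduct, smul_dotProduct,
        dotProduct_smul, smul_eq_mul]
      ring
    rw [expand] at h0
    ring_nf at h0 ⊢
    rw [herm_dot_comm h.1 x y] at h0
    linarith
  have := discrim_le_zero key
  rw [discrim] at this
  nlinarith [this]

lemma psd_diag_nonneg {ρ : Matrix V V ℝ} (h : ρ.PosSemidef) (j : V) : 0 ≤ ρ j j := by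
  classical
  have := psd_quad h (Pi.single j 1)
  simpa [dotProduct, mulVec, Pi.single_apply, mul_ite, Finset.sum_ite_eq'] using this

lemma psd_single_dot {ρ : Matrix V V ℝ} (j k : V) [DecidableEq V] :
    (Pi.single j 1 : V → ℝ) ⬝ᵥ ρ *ᵥ Pi.single k 1 = ρ j k := by
  simp [dotProduct, mulVec, Pi.single_apply, mul_ite, Finset.sum_ite_eq']

lemma psd_entry_eq_zero {ρ : Matrix V V ℝ} (h : ρ.PosSemidef) {j k : V} (hj : ρ j j = 0) :
    ρ j k = 0 := by
  classical
  have hc := psd_cauchy h (Pi.single j 1) (Pi.single k 1)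
  rw [psd_single_dot, psd_single_dot, hj] at hc
  nlinarith [hc]

lemma thetaSet_nonneg (G : SimpleGraph V) {r : ℝ} (hr : r ∈ thetaSet G) : 0 ≤ r := by
  obtain ⟨ρ, hpsd, -, -, hval⟩ := hr
  rw [hval, sum_sum_eq_dot]
  exact psd_quad hpsd 1

lemma thetaSet_bddAbove (G : SimpleGraph V) : BddAbove (thetaSet G) := by
  classical
  refine ⟨(Fintype.card V : ℝ), fun r hr => ?_⟩
  obtain ⟨ρ, hpsd, htr, hz, hval⟩ := hr
  have hr0 : 0 ≤ r := thetaSet_nonneg G ⟨ρ, hpsd, htr, hz, hval⟩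
  rw [hval, sum_sum_eq_dot] at hr0 ⊢
  set r := (1 : V → ℝ) ⬝ᵥ ρ *ᵥ 1 with hrdef
  have hdecomp : r = ∑ j, (1 : V → ℝ) ⬝ᵥ ρ *ᵥ Pi.single j 1 := by
    simp only [hrdef, dotProduct, mulVec, Pi.one_apply, one_mul, Pi.single_apply, mul_ite,
      mul_one, mul_zero, Finset.sum_ite_eq', Finset.mem_univ, if_true]
    exact Finset.sum_comm
  have hcs : ∀ j, ((1 : V → ℝ) ⬝ᵥ ρ *ᵥ Pi.single j 1) ^ 2 ≤ r * ρ j j := by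
    intro j
    have h := psd_cauchy hpsd 1 (Pi.single j 1)
    rwa [psd_single_dot, ← hrdef] at h
  have hdiag : ∑ j, ρ j j = 1 := htr
  have hsq : r ^ 2 ≤ (Fintype.card V : ℝ) * (r * 1) := by
    calc r ^ 2 = (∑ j, (1 : V → ℝ) ⬝ᵥ ρ *ᵥ Pi.single j 1) ^ 2 := by rw [← hdecomp]
    _ ≤ (Fintype.card V : ℝ) * ∑ j, ((1 : V → ℝ) ⬝ᵥ ρ *ᵥ Pi.single j 1) ^ 2 := by
        simpa using sq_sum_le_card_mul_sum_sq (s := Finset.univ)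
          (f := fun j => (1 : V → ℝ) ⬝ᵥ ρ *ᵥ Pi.single j 1)
    _ ≤ (Fintype.card V : ℝ) * ∑ j, r * ρ j j := by
        have hsum : ∑ j, ((1 : V → ℝ) ⬝ᵥ ρ *ᵥ Pi.single j 1) ^ 2 ≤ ∑ j, r * ρ j j :=
          Finset.sum_le_sum fun j _ => hcs j
        have hc : (0:ℝ) ≤ (Fintype.card V : ℝ) := by positivity
        exact mul_le_mul_of_nonneg_left hsum hc
    _ = (Fintype.card V : ℝ) * (r * 1) := by rw [← Finset.mul_sum, hdiag]
  rcases hr0.eq_or_lt with h | h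
  · rw [← h]; positivity
  · nlinarith [hsq]

lemma one_mem_thetaSet [Nonempty V] (G : SimpleGraph V) : (1 : ℝ) ∈ thetaSet G := by
  classical
  obtain ⟨v⟩ := ‹Nonempty V›
  refine ⟨Matrix.diagonal (Pi.single v 1), ?_, ?_, ?_, ?_⟩
  · exact Matrix.PosSemidef.diagonal (by intro i; by_cases h : i = v <;> simp [Pi.single_apply, h])
  · simp [Matrix.trace_diagonal]
  · intro j k hadj
    exact Matrix.diagonal_apply_ne _ (G.ne_of_adj hadj)
  · simp [Matrix.diagonal_apply, Pi.single_apply]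

lemma le_lovaszTheta {G : SimpleGraph V} {r : ℝ} (hr : r ∈ thetaSet G) : r ≤ lovaszTheta G :=
  le_csSup (thetaSet_bddAbove G) hr

lemma lovaszTheta_nonneg (G : SimpleGraph V) : 0 ≤ lovaszTheta G := by
  rcases (thetaSet G).eq_empty_or_nonempty with h | ⟨r, hr⟩
  · rw [lovaszTheta_eq, h, Real.sSup_empty]
  · exact le_trans (thetaSet_nonneg G hr) (le_lovaszTheta hr)

lemma one_le_lovaszTheta [Nonempty V] (G : SimpleGraph V) : 1 ≤ lovaszTheta G :=
  le_lovaszTheta (one_mem_thetaSet G)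

end Aux

section Union

variable {V₁ V₂ : Type*} [Fintype V₁] [Fintype V₂]

lemma elim_dot_elim (ρ : Matrix (V₁ ⊕ V₂) (V₁ ⊕ V₂) ℝ) (u x : V₁ → ℝ) (v y : V₂ → ℝ) :
    Sum.elim u v ⬝ᵥ ρ *ᵥ Sum.elim x y
      = (∑ j, ∑ k, u j * ρ (.inl j) (.inl k) * x k)
        + (∑ j, ∑ k, u j * ρ (.inl j) (.inr k) * y k)
        + (∑ j, ∑ k, v j * ρ (.inr j) (.inl k) * x k)
        + (∑ j, ∑ k, v j * ρ (.inr j) (.inr k) * y k) := by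
  simp only [dotProduct, mulVec, Fintype.sum_sum_type, Sum.elim_inl, Sum.elim_inr,
    mul_add, Finset.mul_sum, Finset.sum_add_distrib, mul_assoc]
  ring

lemma sum_sum_sumtype (ρ : Matrix (V₁ ⊕ V₂) (V₁ ⊕ V₂) ℝ) :
    ∑ j, ∑ k, ρ j k
      = (∑ j, ∑ k, ρ (.inl j) (.inl k)) + (∑ j, ∑ k, ρ (.inl j) (.inr k))
        + (∑ j, ∑ k, ρ (.inr j) (.inl k)) + (∑ j, ∑ k, ρ (.inr j) (.inr k)) := by
  simp only [Fintype.sum_sum_type, Finset.sum_add_distrib]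
  ring

lemma memUnion_right (G₁ : SimpleGraph V₁) (G₂ : SimpleGraph V₂) {b : ℝ}
    (hb : b ∈ thetaSet G₂) : b ∈ thetaSet (disjUnionGraph G₁ G₂) := by
  obtain ⟨ρ, hpsd, htr, hzero, hval⟩ := hb
  refine ⟨fromBlocks 0 0 0 ρ, .of_dotProduct_mulVec_nonneg ?_ ?_, ?_, ?_, ?_⟩
  · show _ᴴ = _
    rw [fromBlocks_conjTranspose]
    simp [hpsd.1.eq, herm_transpose hpsd.1]
  · intro x
    have hx : x = Sum.elim (x ∘ Sum.inl) (x ∘ Sum.inr) := (Sum.elim_comp_inl_inr x).symm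
    rw [hx, fromBlocks_mulVec]
    simp only [Sum.elim_comp_inl, Sum.elim_comp_inr, zero_mulVec, add_zero, zero_add,
      sumElim_dotProduct_sumElim, dotProduct_zero, star_trivial]
    simpa using psd_quad hpsd (x ∘ Sum.inr)
  · simp only [Matrix.trace, Matrix.diag, Fintype.sum_sum_type, fromBlocks_apply₁₁,
      fromBlocks_apply₂₂, Matrix.zero_apply, Finset.sum_const_zero, zero_add]
    exact htr
  · intro j k hadj
    cases j <;> cases k <;> simp_all [disjUnionGraph, fromBlocks]
  · rw [sum_sum_sumtype]
    simpa using hval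

lemma memUnion_left (G₁ : SimpleGraph V₁) (G₂ : SimpleGraph V₂) {a : ℝ}
    (ha : a ∈ thetaSet G₁) : a ∈ thetaSet (disjUnionGraph G₁ G₂) := by
  obtain ⟨ρ, hpsd, htr, hzero, hval⟩ := ha
  refine ⟨fromBlocks ρ 0 0 0, .of_dotProduct_mulVec_nonneg ?_ ?_, ?_, ?_, ?_⟩
  · show _ᴴ = _
    rw [fromBlocks_conjTranspose]
    simp [hpsd.1.eq, herm_transpose hpsd.1]
  · intro x
    have hx : x = Sum.elim (x ∘ Sum.inl) (x ∘ Sum.inr) := (Sum.elim_comp_inl_inr x).symm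
    rw [hx, fromBlocks_mulVec]
    simp only [Sum.elim_comp_inl, Sum.elim_comp_inr, zero_mulVec, add_zero, zero_add,
      sumElim_dotProduct_sumElim, dotProduct_zero, star_trivial]
    simpa using psd_quad hpsd (x ∘ Sum.inl)
  · simp only [Matrix.trace, Matrix.diag, Fintype.sum_sum_type, fromBlocks_apply₁₁,
      fromBlocks_apply₂₂, Matrix.zero_apply, Finset.sum_const_zero, add_zero]
    exact htr
  · intro j k hadj
    cases j <;> cases k <;> simp_all [disjUnionGraph, fromBlocks]
  · rw [sum_sum_sumtype]
    simpa using hval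

lemma dot_vecMulVec_dot {m n : Type*} [Fintype m] [Fintype n]
    (w₁ u : m → ℝ) (w₂ v : n → ℝ) :
    u ⬝ᵥ (vecMulVec w₁ w₂) *ᵥ v = (u ⬝ᵥ w₁) * (w₂ ⬝ᵥ v) := by
  simp only [dotProduct, mulVec, vecMulVec_apply, Finset.mul_sum, Finset.sum_mul, mul_assoc]
  rw [Finset.sum_comm]

lemma memUnion_add (G₁ : SimpleGraph V₁) (G₂ : SimpleGraph V₂) {a b : ℝ}
    (ha : a ∈ thetaSet G₁) (hb : b ∈ thetaSet G₂) (ha0 : 0 < a) (hb0 : 0 < b) :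
    a + b ∈ thetaSet (disjUnionGraph G₁ G₂) := by
  obtain ⟨ρ₁, hpsd₁, htr₁, hzero₁, hval₁⟩ := ha
  obtain ⟨ρ₂, hpsd₂, htr₂, hzero₂, hval₂⟩ := hb
  set s : ℝ := a + b with hs
  have hs0 : 0 < s := by positivity
  set w₁ : V₁ → ℝ := ρ₁ *ᵥ 1 with hw₁
  set w₂ : V₂ → ℝ := ρ₂ *ᵥ 1 with hw₂
  have hwa : ∑ j, w₁ j = a := by
    rw [hval₁]; simp [hw₁, mulVec, dotProduct]
  have hwb : ∑ j, w₂ j = b := by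
    rw [hval₂]; simp [hw₂, mulVec, dotProduct]
  have hadot : (1 : V₁ → ℝ) ⬝ᵥ ρ₁ *ᵥ 1 = a := by rw [hval₁, sum_sum_eq_dot]
  have hbdot : (1 : V₂ → ℝ) ⬝ᵥ ρ₂ *ᵥ 1 = b := by rw [hval₂, sum_sum_eq_dot]
  set X : Matrix V₁ V₂ ℝ := s⁻¹ • vecMulVec w₁ w₂ with hX
  refine ⟨fromBlocks ((a/s) • ρ₁) X Xᵀ ((b/s) • ρ₂), .of_dotProduct_mulVec_nonneg ?_ ?_, ?_, ?_, ?_⟩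
  · show _ᴴ = _
    rw [fromBlocks_conjTranspose]
    have h1 : ((a/s) • ρ₁)ᴴ = (a/s) • ρ₁ := by
      ext i j; simp [conjTranspose_apply, herm_entry hpsd₁.1 i j]
    have h2 : ((b/s) • ρ₂)ᴴ = (b/s) • ρ₂ := by
      ext i j; simp [conjTranspose_apply, herm_entry hpsd₂.1 i j]
    have h3 : (Xᵀ)ᴴ = X := by ext i j; simp [conjTranspose_apply]
    have h4 : Xᴴ = Xᵀ := by ext i j; simp [conjTranspose_apply]
    rw [h1, h2, h3, h4]
  · intro x
    rw [star_trivial]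
    have hx : x = Sum.elim (x ∘ Sum.inl) (x ∘ Sum.inr) := (Sum.elim_comp_inl_inr x).symm
    set u : V₁ → ℝ := x ∘ Sum.inl
    set v : V₂ → ℝ := x ∘ Sum.inr
    rw [hx, fromBlocks_mulVec]
    simp only [Sum.elim_comp_inl, Sum.elim_comp_inr, sumElim_dotProduct_sumElim,
      dotProduct_add]
    set P : ℝ := u ⬝ᵥ ρ₁ *ᵥ 1 with hP
    set R : ℝ := v ⬝ᵥ ρ₂ *ᵥ 1 with hR
    have hXT : Xᵀ = s⁻¹ • vecMulVec w₂ w₁ := by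
      ext i j
      simp [hX, vecMulVec_apply, mul_comm]
    have hXv : u ⬝ᵥ X *ᵥ v = s⁻¹ * (P * R) := by
      rw [hX, smul_mulVec, dotProduct_smul, smul_eq_mul, dot_vecMulVec_dot,
        dotProduct_comm w₂ v]
    have hXtu : v ⬝ᵥ Xᵀ *ᵥ u = s⁻¹ * (P * R) := by
      rw [hXT, smul_mulVec, dotProduct_smul, smul_eq_mul, dot_vecMulVec_dot,
        dotProduct_comm w₁ u]
      ring
    have hq1 : u ⬝ᵥ ((a/s) • ρ₁) *ᵥ u = (a/s) * (u ⬝ᵥ ρ₁ *ᵥ u) := by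
      simp [smul_mulVec]
    have hq2 : v ⬝ᵥ ((b/s) • ρ₂) *ᵥ v = (b/s) * (v ⬝ᵥ ρ₂ *ᵥ v) := by
      simp [smul_mulVec]
    have hc1 : P ^ 2 ≤ (u ⬝ᵥ ρ₁ *ᵥ u) * a := by
      have := psd_cauchy hpsd₁ u 1
      rwa [hadot] at this
    have hc2 : R ^ 2 ≤ (v ⬝ᵥ ρ₂ *ᵥ v) * b := by
      have := psd_cauchy hpsd₂ v 1
      rwa [hbdot] at this
    have hqu : 0 ≤ u ⬝ᵥ ρ₁ *ᵥ u := psd_quad hpsd₁ u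
    have hqv : 0 ≤ v ⬝ᵥ ρ₂ *ᵥ v := psd_quad hpsd₂ v
    rw [hXv, hXtu, hq1, hq2]
    rw [div_eq_mul_inv, div_eq_mul_inv]
    have key : 0 ≤ (a * (u ⬝ᵥ ρ₁ *ᵥ u) + b * (v ⬝ᵥ ρ₂ *ᵥ v) + (P * R) + (P * R)) := by
      nlinarith [sq_nonneg (P + R)]
    have hexpand : a * s⁻¹ * (u ⬝ᵥ ρ₁ *ᵥ u) + s⁻¹ * (P * R)
        + (s⁻¹ * (P * R) + b * s⁻¹ * (v ⬝ᵥ ρ₂ *ᵥ v))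
        = s⁻¹ * (a * (u ⬝ᵥ ρ₁ *ᵥ u) + b * (v ⬝ᵥ ρ₂ *ᵥ v) + (P * R) + (P * R)) := by
      ring
    rw [hexpand]
    positivity
  · show Matrix.trace _ = 1
    simp only [Matrix.trace, Matrix.diag, Fintype.sum_sum_type, fromBlocks_apply₁₁,
      fromBlocks_apply₂₂, Matrix.smul_apply, smul_eq_mul]
    rw [← Finset.mul_sum, ← Finset.mul_sum,
      show ∑ j, ρ₁ j j = 1 from htr₁, show ∑ j, ρ₂ j j = 1 from htr₂]
    field_simp
    exact hs.symm
  · intro j k hadj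
    cases j <;> cases k
    · have : G₁.Adj _ _ := hadj
      simp [fromBlocks_apply₁₁, hzero₁ _ _ this]
    · exact absurd hadj (by simp [disjUnionGraph])
    · exact absurd hadj (by simp [disjUnionGraph])
    · have : G₂.Adj _ _ := hadj
      simp [fromBlocks_apply₂₂, hzero₂ _ _ this]
  · rw [sum_sum_sumtype]
    have e11 : ∑ j, ∑ k, ((a/s) • ρ₁) j k = (a/s) * a := by
      rw [show ∑ j, ∑ k, ((a/s) • ρ₁) j k = (a/s) * ∑ j, ∑ k, ρ₁ j k by
        simp [Finset.mul_sum], ← hval₁]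
    have e22 : ∑ j, ∑ k, ((b/s) • ρ₂) j k = (b/s) * b := by
      rw [show ∑ j, ∑ k, ((b/s) • ρ₂) j k = (b/s) * ∑ j, ∑ k, ρ₂ j k by
        simp [Finset.mul_sum], ← hval₂]
    have e12 : ∑ j, ∑ k, X j k = s⁻¹ * (a * b) := by
      simp only [hX, Matrix.smul_apply, vecMulVec_apply, smul_eq_mul, ← Finset.mul_sum]
      congr 1
      rw [← hwa, ← hwb, Finset.sum_mul_sum]
      simp [Finset.mul_sum]
    have e21 : ∑ j, ∑ k, Xᵀ j k = s⁻¹ * (a * b) := by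
      rw [← e12]
      exact Finset.sum_comm
    simp only [fromBlocks_apply₁₁, fromBlocks_apply₁₂, fromBlocks_apply₂₁, fromBlocks_apply₂₂]
    rw [e11, e22, e12, e21]
    field_simp
    ring

lemma sub_feasible {W U : Type*} [Fintype W] [Fintype U] (G : SimpleGraph W)
    {ρ : Matrix U U ℝ} (hpsd : ρ.PosSemidef) (f : W → U)
    (hzero : ∀ j k, G.Adj j k → ρ (f j) (f k) = 0) :
    ∑ j, ∑ k, ρ (f j) (f k) ≤ (∑ j, ρ (f j) (f j)) * lovaszTheta G := by
  classical
  set t := ∑ j, ρ (f j) (f j) with ht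
  have ht0 : 0 ≤ t := Finset.sum_nonneg fun j _ => psd_diag_nonneg hpsd _
  rcases ht0.eq_or_lt with h0 | h0
  · have hdiag : ∀ j : W, ρ (f j) (f j) = 0 := by
      intro j
      have := (Finset.sum_eq_zero_iff_of_nonneg
        (fun j _ => psd_diag_nonneg hpsd (f j))).mp h0.symm
      exact this j (Finset.mem_univ j)
    have : ∑ j, ∑ k, ρ (f j) (f k) = 0 := by
      apply Finset.sum_eq_zero; intro j _
      apply Finset.sum_eq_zero; intro k _
      exact psd_entry_eq_zero hpsd (hdiag j)
    rw [this, ← h0, zero_mul]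
  · set A : Matrix W W ℝ := Matrix.of (fun j k => t⁻¹ * ρ (f j) (f k)) with hA
    have hkey : ∀ (x : W → ℝ) (g : U → ℝ),
        ∑ u, (∑ j, (if u = f j then x j else 0)) * g u = ∑ j, x j * g (f j) := by
      intro x g
      simp only [Finset.sum_mul, ite_mul, zero_mul]
      rw [Finset.sum_comm]
      simp [Finset.sum_ite_eq']
    have hmem : t⁻¹ * ∑ j, ∑ k, ρ (f j) (f k) ∈ thetaSet G := by
      refine ⟨A, .of_dotProduct_mulVec_nonneg ?_ ?_, ?_, ?_, ?_⟩
      · show _ᴴ = _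
        ext i j
        simp [hA, conjTranspose_apply, herm_entry hpsd.1 (f i) (f j)]
      · intro x
        rw [star_trivial]
        set y : U → ℝ := fun u => ∑ j, (if u = f j then x j else 0) with hy
        have hq : x ⬝ᵥ A *ᵥ x = t⁻¹ * (y ⬝ᵥ ρ *ᵥ y) := by
          have h1 : y ⬝ᵥ ρ *ᵥ y = ∑ j, x j * ∑ k, x k * ρ (f j) (f k) := by
            have := hkey x (fun u => ∑ u', ρ u u' * y u')
            simp only [dotProduct, mulVec]
            rw [this]
            congr 1; funext j; congr 1
            have h2 : ∑ u', ρ (f j) u' * y u' = ∑ u', y u' * ρ (f j) u' := by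
              congr 1; funext u'; ring
            rw [h2, hkey x (fun u' => ρ (f j) u')]
          rw [h1]
          simp only [dotProduct, mulVec, hA, Matrix.of_apply, Finset.mul_sum]
          congr 1; funext j; congr 1; funext k; ring
        rw [hq]
        have := psd_quad hpsd y
        positivity
      · show Matrix.trace A = 1
        simp only [Matrix.trace, Matrix.diag, hA, Matrix.of_apply, ← Finset.mul_sum]
        rw [← ht, inv_mul_cancel₀ (ne_of_gt h0)]
      · intro j k hadj
        simp [hA, hzero j k hadj]
      · simp only [hA, Matrix.of_apply, ← Finset.mul_sum]
    have hle := le_lovaszTheta hmem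
    calc ∑ j, ∑ k, ρ (f j) (f k) = t * (t⁻¹ * ∑ j, ∑ k, ρ (f j) (f k)) := by
          field_simp
    _ ≤ t * lovaszTheta G := by
          exact mul_le_mul_of_nonneg_left hle ht0

lemma union_upper (G₁ : SimpleGraph V₁) (G₂ : SimpleGraph V₂) {r : ℝ}
    (hr : r ∈ thetaSet (disjUnionGraph G₁ G₂)) :
    r ≤ lovaszTheta G₁ + lovaszTheta G₂ := by
  classical
  obtain ⟨ρ, hpsd, htr, hzero, hval⟩ := hr
  set α := ∑ j, ∑ k, ρ (Sum.inl j) (Sum.inl k) with hα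
  set β := ∑ j, ∑ k, ρ (Sum.inr j) (Sum.inr k) with hβ
  set γ := ∑ j, ∑ k, ρ (Sum.inl j) (Sum.inr k) with hγ
  have hαq : α = Sum.elim (1:V₁→ℝ) (0:V₂→ℝ) ⬝ᵥ ρ *ᵥ Sum.elim 1 0 := by
    rw [elim_dot_elim]; simp [hα]
  have hβq : β = Sum.elim (0:V₁→ℝ) (1:V₂→ℝ) ⬝ᵥ ρ *ᵥ Sum.elim 0 1 := by
    rw [elim_dot_elim]; simp [hβ]
  have hγq : γ = Sum.elim (1:V₁→ℝ) (0:V₂→ℝ) ⬝ᵥ ρ *ᵥ Sum.elim (0:V₁→ℝ) (1:V₂→ℝ) := by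
    rw [elim_dot_elim]; simp [hγ]
  have hγ' : ∑ j, ∑ k, ρ (Sum.inr j) (Sum.inl k) = γ := by
    rw [Finset.sum_comm, hγ]
    exact Finset.sum_congr rfl fun j _ => Finset.sum_congr rfl fun k _ => herm_entry hpsd.1 _ _
  have hrval : r = α + γ + γ + β := by rw [hval, sum_sum_sumtype, hγ']
  have hγsq : γ ^ 2 ≤ α * β := by
    rw [hαq, hβq, hγq]; exact psd_cauchy hpsd _ _
  have hα0 : 0 ≤ α := hαq ▸ psd_quad hpsd _
  have hβ0 : 0 ≤ β := hβq ▸ psd_quad hpsd _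
  set t := ∑ j, ρ (Sum.inl j) (Sum.inl j) with ht
  set t' := ∑ j, ρ (Sum.inr j) (Sum.inr j) with ht'
  have htt : t + t' = 1 := by
    have h := htr
    simpa [Matrix.trace, Matrix.diag, Fintype.sum_sum_type, ht, ht'] using h
  have ht0 : 0 ≤ t := Finset.sum_nonneg fun j _ => psd_diag_nonneg hpsd _
  have ht'0 : 0 ≤ t' := Finset.sum_nonneg fun j _ => psd_diag_nonneg hpsd _
  have hαt : α ≤ t * lovaszTheta G₁ :=
    sub_feasible G₁ hpsd Sum.inl (fun j k h => hzero _ _ h)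
  have hβt : β ≤ t' * lovaszTheta G₂ :=
    sub_feasible G₂ hpsd Sum.inr (fun j k h => hzero _ _ h)
  have hθ1 : 0 ≤ lovaszTheta G₁ := lovaszTheta_nonneg G₁
  have hθ2 : 0 ≤ lovaszTheta G₂ := lovaszTheta_nonneg G₂
  rw [hrval]
  have e1 : t * lovaszTheta G₁ + t' * lovaszTheta G₁ = lovaszTheta G₁ := by
    rw [← add_mul, htt, one_mul]
  have e2 : t * lovaszTheta G₂ + t' * lovaszTheta G₂ = lovaszTheta G₂ := by
    rw [← add_mul, htt, one_mul]
  rcases le_or_gt γ 0 with hγ0 | hγ0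
  · linarith [mul_nonneg ht'0 hθ1, mul_nonneg ht0 hθ2]
  · have hαβ : α * β ≤ (t * lovaszTheta G₁) * (t' * lovaszTheta G₂) :=
      mul_le_mul hαt hβt hβ0 (hα0.trans hαt)
    have hww : 4 * γ ^ 2 ≤ (t' * lovaszTheta G₁ + t * lovaszTheta G₂) ^ 2 := by
      nlinarith [sq_nonneg (t' * lovaszTheta G₁ - t * lovaszTheta G₂)]
    have hw0 : 0 ≤ t' * lovaszTheta G₁ + t * lovaszTheta G₂ := by positivity
    have h2γ : 2 * γ ≤ t' * lovaszTheta G₁ + t * lovaszTheta G₂ := by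
      nlinarith [hww, hw0, hγ0]
    linarith

lemma thetaSet_empty [IsEmpty V₁] (G : SimpleGraph V₁) : thetaSet G = ∅ := by
  ext r
  simp only [thetaSet, Set.mem_setOf_eq, Set.mem_empty_iff_false, iff_false]
  rintro ⟨ρ, -, htr, -⟩
  have h : ρ.trace = 0 := by simp [Matrix.trace]
  rw [h] at htr
  norm_num at htr

end Union

/-- Lovász theta is additive under disjoint unions of graphs. -/
theorem lovaszTheta_disjUnion {V₁ V₂ : Type*} [Fintype V₁] [Fintype V₂]
    (G₁ : SimpleGraph V₁) (G₂ : SimpleGraph V₂) :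
    lovaszTheta (disjUnionGraph G₁ G₂) = lovaszTheta G₁ + lovaszTheta G₂ := by
  apply le_antisymm
  · rcases (thetaSet (disjUnionGraph G₁ G₂)).eq_empty_or_nonempty with h | h
    · rw [lovaszTheta_eq, h, Real.sSup_empty]
      exact add_nonneg (lovaszTheta_nonneg _) (lovaszTheta_nonneg _)
    · rw [lovaszTheta_eq]
      exact csSup_le h fun r hr => union_upper G₁ G₂ hr
  · rcases isEmpty_or_nonempty V₁ with h1 | h1
    · have hθ1 : lovaszTheta G₁ = 0 := by
        rw [lovaszTheta_eq, thetaSet_empty, Real.sSup_empty]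
      rw [hθ1, zero_add]
      rcases (thetaSet G₂).eq_empty_or_nonempty with h2 | h2
      · rw [lovaszTheta_eq G₂, h2, Real.sSup_empty]
        exact lovaszTheta_nonneg _
      · exact csSup_le_csSup (thetaSet_bddAbove _) h2 fun b hb => memUnion_right G₁ G₂ hb
    rcases isEmpty_or_nonempty V₂ with h2 | h2
    · have hθ2 : lovaszTheta G₂ = 0 := by
        rw [lovaszTheta_eq, thetaSet_empty, Real.sSup_empty]
      rw [hθ2, add_zero]
      rcases (thetaSet G₁).eq_empty_or_nonempty with h1' | h1'
      · rw [lovaszTheta_eq G₁, h1', Real.sSup_empty]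
        exact lovaszTheta_nonneg _
      · exact csSup_le_csSup (thetaSet_bddAbove _) h1' fun a ha => memUnion_left G₁ G₂ ha
    refine le_of_forall_pos_le_add ?_
    intro ε hε
    set δ := min (ε/2) (1/2) with hδ
    have hδε : δ ≤ ε/2 := min_le_left _ _
    have hδh : δ ≤ 1/2 := min_le_right _ _
    have hδ0 : 0 < δ := lt_min (by linarith) (by norm_num)
    obtain ⟨a, haS, ha⟩ := exists_lt_of_lt_csSup ⟨1, one_mem_thetaSet G₁⟩
      (show lovaszTheta G₁ - δ < lovaszTheta G₁ by linarith)
    obtain ⟨b, hbS, hb⟩ := exists_lt_of_lt_csSup ⟨1, one_mem_thetaSet G₂⟩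
      (show lovaszTheta G₂ - δ < lovaszTheta G₂ by linarith)
    have h1θ := one_le_lovaszTheta G₁
    have h2θ := one_le_lovaszTheta G₂
    have ha0 : 0 < a := by linarith
    have hb0 : 0 < b := by linarith
    have hmem := memUnion_add G₁ G₂ haS hbS ha0 hb0
    have hle := le_lovaszTheta hmem
    linarith
end
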